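/- With S positive definite and invariant under the twirling 𝓔, and K(S) = S^{-1/2}(𝓔((S^{1/2}RS^{1/2})^{1/2}))²S^{-1/2}, the fidelity satisfies F(S, K(S)) = F(R, S). -/

import Mathlib

open Matrix
open scoped ComplexOrder Classical

variable {n : Type*} [Fintype n] [DecidableEq n]

/-- The positive semidefinite square root of a matrix (junk value `0` if not PSD). -/
noncomputable def msqrt (A : Matrix n n ℂ) : Matrix n n ℂ :=
  if h : A.PosSemidef then (h.1.eigenvectorUnitary : Matrix n n ℂ) *
    diagonal (fun i => ((Real.sqrt (h.1.eigenvalues i) : ℝ) : ℂ)) *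
    (star h.1.eigenvectorUnitary : Matrix n n ℂ) else 0

/-- The trace norm `‖M‖₁ = Tr √(Mᴴ M)`. -/
noncomputable def traceNorm (M : Matrix n n ℂ) : ℝ :=
  ((msqrt (Mᴴ * M)).trace).re

/-- The fidelity `F(R,S) = (Tr √(√R S √R))²` of positive semidefinite matrices. -/
noncomputable def fidelity (R S : Matrix n n ℂ) : ℝ :=
  (((msqrt (msqrt R * S * msqrt R)).trace).re) ^ 2

/-- The squared Bures distance `B(R,S)² = Tr R + Tr S - 2 √F(R,S)`. -/
noncomputable def bures2 (R S : Matrix n n ℂ) : ℝ :=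
  (R.trace).re + (S.trace).re - 2 * Real.sqrt (fidelity R S)

/-- The twirling map `𝓔(X) = (1/|G|) ∑ g, U g * X * (U g)ᴴ`. -/
noncomputable def twirl {G : Type*} [Fintype G] (U : G → Matrix n n ℂ)
    (X : Matrix n n ℂ) : Matrix n n ℂ :=
  (Fintype.card G : ℂ)⁻¹ • ∑ g, U g * X * (U g)ᴴ

/-- The maximum eigenvalue of a Hermitian matrix. -/
noncomputable def lamMax {A : Matrix n n ℂ} (hA : A.IsHermitian) : ℝ :=
  ⨆ i, hA.eigenvalues i

/-- The minimum eigenvalue of a Hermitian matrix. -/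
noncomputable def lamMin {A : Matrix n n ℂ} (hA : A.IsHermitian) : ℝ :=
  ⨅ i, hA.eigenvalues i

/-- The fixed point iteration map `K(S) = S^{-1/2} (𝓔((S^{1/2} R S^{1/2})^{1/2}))² S^{-1/2}`. -/
noncomputable def iterMap {G : Type*} [Fintype G] (U : G → Matrix n n ℂ)
    (R S : Matrix n n ℂ) : Matrix n n ℂ :=
  (msqrt S)⁻¹ * (twirl U (msqrt (msqrt S * R * msqrt S))) ^ 2 * (msqrt S)⁻¹


section Aux

open scoped MatrixOrder

lemma msqrt_of_posSemidef {A : Matrix n n ℂ} (h : A.PosSemidef) : msqrt A = CFC.sqrt A := by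
  rw [msqrt, dif_pos h, CFC.sqrt_eq_cfc, cfc_nnreal_eq_real _ A, h.1.cfc_eq, IsHermitian.cfc,
    Unitary.conjStarAlgAut_apply]
  congr 2
  ext i j
  simp [diagonal_apply, max_eq_left (h.eigenvalues_nonneg i)]

lemma msqrt_posSemidef {A : Matrix n n ℂ} (h : A.PosSemidef) : (msqrt A).PosSemidef := by
  rw [msqrt_of_posSemidef h]; exact Matrix.nonneg_iff_posSemidef.mp (CFC.sqrt_nonneg A)

lemma msqrt_mul_self {A : Matrix n n ℂ} (h : A.PosSemidef) : msqrt A * msqrt A = A := by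
  rw [msqrt_of_posSemidef h]; exact CFC.sqrt_mul_sqrt_self A h.nonneg

lemma msqrt_isHermitian {A : Matrix n n ℂ} (h : A.PosSemidef) : (msqrt A).IsHermitian :=
  (msqrt_posSemidef h).isHermitian

/-- Uniqueness of the PSD square root. -/
lemma msqrt_eq_of_sq {A B : Matrix n n ℂ} (hA : A.PosSemidef) (hB : B.PosSemidef)
    (h : B * B = A) : msqrt A = B := by
  rw [msqrt_of_posSemidef hA]
  exact CFC.sqrt_unique h hB.nonneg

lemma msqrt_det_ne_zero {S : Matrix n n ℂ} (hS : S.PosDef) : (msqrt S).det ≠ 0 := by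
  intro h
  have h2 : S.det = 0 := by
    rw [← msqrt_mul_self hS.posSemidef, det_mul, h, mul_zero]
  exact hS.det_pos.ne' h2

/-- A nonnegative real scalar multiple of a PSD matrix is PSD. -/
lemma posSemidef_nat_inv_smul {A : Matrix n n ℂ} (h : A.PosSemidef) (k : ℕ) :
    ((k : ℂ)⁻¹ • A).PosSemidef := by
  constructor
  · unfold Matrix.IsHermitian
    rw [conjTranspose_smul, h.isHermitian.eq]
    congr 1
    simp
  · intro x
    have hk : (0 : ℂ) ≤ (k : ℂ)⁻¹ := by
      rw [show ((k : ℂ))⁻¹ = ((k : ℝ)⁻¹ : ℝ) by push_cast; ring]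
      exact Complex.zero_le_real.2 (by positivity)
    exact (h.smul hk).2 x

lemma posSemidef_sum {ι : Type*} (s : Finset ι) (f : ι → Matrix n n ℂ)
    (h : ∀ i ∈ s, (f i).PosSemidef) : (∑ i ∈ s, f i).PosSemidef :=
  Finset.sum_induction f _ (fun _ _ ha hb => ha.add hb) Matrix.PosSemidef.zero h

lemma posSemidef_congr {A : Matrix n n ℂ} (hA : A.PosSemidef) {T : Matrix n n ℂ}
    (hT : T.IsHermitian) : (T * A * T).PosSemidef := by
  have := hA.mul_mul_conjTranspose_same T
  rwa [hT.eq] at this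

lemma twirl_posSemidef {G : Type*} [Fintype G] (U : G → Matrix n n ℂ)
    {A : Matrix n n ℂ} (hA : A.PosSemidef) : (twirl U A).PosSemidef := by
  unfold twirl
  exact posSemidef_nat_inv_smul
    (posSemidef_sum _ _ (fun g _ => hA.mul_mul_conjTranspose_same (U g))) _

lemma trace_twirl {G : Type*} [Fintype G] (U : G → Matrix n n ℂ)
    (hU : ∀ g, U g ∈ Matrix.unitaryGroup n ℂ)
    (hG : (Fintype.card G : ℂ) ≠ 0) (A : Matrix n n ℂ) :
    (twirl U A).trace = A.trace := by
  unfold twirl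
  rw [trace_smul, trace_sum]
  have h1 : ∀ g : G, (U g * A * (U g)ᴴ).trace = A.trace := by
    intro g
    have hu : (U g)ᴴ * U g = 1 := by
      have := (mem_unitaryGroup_iff'.mp (hU g))
      rwa [Matrix.star_eq_conjTranspose] at this
    rw [trace_mul_cycle, hu, one_mul]
  rw [Finset.sum_congr rfl (fun g _ => h1 g), Finset.sum_const, Finset.card_univ,
    smul_eq_mul, nsmul_eq_mul, ← mul_assoc, inv_mul_cancel₀ hG, one_mul]

/-- Fidelity symmetry at the level of the trace of the square root. -/
lemma trace_msqrt_symm {R S : Matrix n n ℂ} (hR : R.PosDef) (hS : S.PosDef) :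
    (msqrt (msqrt R * S * msqrt R)).trace = (msqrt (msqrt S * R * msqrt S)).trace := by
  have hTR : (msqrt R).IsHermitian := msqrt_isHermitian hR.posSemidef
  have hTS : (msqrt S).IsHermitian := msqrt_isHermitian hS.posSemidef
  set TR := msqrt R with hTRdef
  set TS := msqrt S with hTSdef
  set X := TR * TS with hXdef
  have hXXH : X * Xᴴ = TR * S * TR := by
    rw [hXdef, conjTranspose_mul, hTR.eq, hTS.eq]
    calc TR * TS * (TS * TR) = TR * (TS * TS) * TR := by
          simp only [mul_assoc]
      _ = TR * S * TR := by rw [msqrt_mul_self hS.posSemidef]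
  have hXHX : Xᴴ * X = TS * R * TS := by
    rw [hXdef, conjTranspose_mul, hTR.eq, hTS.eq]
    calc TS * TR * (TR * TS) = TS * (TR * TR) * TS := by
          simp only [mul_assoc]
      _ = TS * R * TS := by rw [msqrt_mul_self hR.posSemidef]
  have hTRS : (TR * S * TR).PosSemidef := posSemidef_congr hS.posSemidef hTR
  have hTSR : (TS * R * TS).PosSemidef := posSemidef_congr hR.posSemidef hTS
  set P := msqrt (TR * S * TR) with hPdef
  have hP : P.PosSemidef := msqrt_posSemidef hTRS
  have hPP : P * P = X * Xᴴ := by rw [hPdef, msqrt_mul_self hTRS, hXXH]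
  have hXdet : X.det ≠ 0 := by
    rw [hXdef, det_mul]
    exact mul_ne_zero (msqrt_det_ne_zero hR) (msqrt_det_ne_zero hS)
  have hPdet : P.det ≠ 0 := by
    intro h
    have : (X * Xᴴ).det = 0 := by rw [← hPP, det_mul, h, mul_zero]
    rw [det_mul, det_conjTranspose] at this
    exact hXdet (by simpa using mul_eq_zero.mp this |>.elim id (fun h => by
      exact star_eq_zero.mp h))
  have hPunit : IsUnit P.det := isUnit_iff_ne_zero.mpr hPdet
  set W := P⁻¹ * X with hWdef
  have hPW : P * W = X := by
    rw [hWdef, ← mul_assoc, mul_nonsing_inv P hPunit, one_mul]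
  have hWH : Wᴴ = Xᴴ * P⁻¹ := by
    rw [hWdef, conjTranspose_mul, conjTranspose_nonsing_inv, hP.isHermitian.eq]
  have hWWH : W * Wᴴ = 1 := by
    rw [hWdef, hWH, mul_assoc, ← mul_assoc X, ← hPP]
    rw [show P⁻¹ * (P * P * P⁻¹) = (P⁻¹ * P) * (P * P⁻¹) by simp only [mul_assoc],
      mul_nonsing_inv P hPunit, nonsing_inv_mul P hPunit, one_mul]
  have hQ : (Wᴴ * P * W).PosSemidef := hP.conjTranspose_mul_mul_same W
  have hQsq : (Wᴴ * P * W) * (Wᴴ * P * W) = TS * R * TS := by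
    rw [← hXHX]
    conv_rhs => rw [← hPW]
    conv_rhs => rw [conjTranspose_mul, hP.isHermitian.eq]
    simp only [mul_assoc]
    congr 2
    rw [← mul_assoc W Wᴴ, hWWH, one_mul]
  have hmsq : msqrt (TS * R * TS) = Wᴴ * P * W := msqrt_eq_of_sq hTSR hQ hQsq
  rw [hmsq, trace_mul_cycle, hWWH, one_mul]

end Aux

/-- `F(S, K(S)) = F(R, S)`. -/
theorem fidelity_iterMap {G : Type*} [Fintype G] (U : G → Matrix n n ℂ)
    (hU : ∀ g, U g ∈ Matrix.unitaryGroup n ℂ)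
    (R S : Matrix n n ℂ) (hR : R.PosDef) (hS : S.PosDef)
    (hfix : twirl U S = S) :
    fidelity S (iterMap U R S) = fidelity R S := by
  by_cases hn : IsEmpty n
  · have htr : ∀ X : Matrix n n ℂ, X.trace = 0 := fun X => by
      simp [Matrix.trace, Finset.univ_eq_empty]
    unfold fidelity
    rw [htr, htr]
  rw [not_isEmpty_iff] at hn
  have hG : (Fintype.card G : ℂ) ≠ 0 := by
    intro h
    have hS0 : S = 0 := by
      rw [← hfix]
      unfold twirl
      rw [h, _root_.inv_zero, zero_smul]
    have := hS.det_pos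
    rw [hS0, det_zero] at this
    exact lt_irrefl 0 this
  have hT : (msqrt S).IsHermitian := msqrt_isHermitian hS.posSemidef
  set T := msqrt S with hTdef
  have hTRT : (T * R * T).PosSemidef := posSemidef_congr hR.posSemidef hT
  set A := msqrt (T * R * T) with hAdef
  have hA : A.PosSemidef := msqrt_posSemidef hTRT
  set E := twirl U A with hEdef
  have hE : E.PosSemidef := twirl_posSemidef U hA
  have hTdet : IsUnit T.det := isUnit_iff_ne_zero.mpr (msqrt_det_ne_zero hS)
  have hkey : T * iterMap U R S * T = E * E := by
    unfold iterMap
    rw [← hTdef, ← hAdef, ← hEdef, pow_two]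
    calc T * (T⁻¹ * (E * E) * T⁻¹) * T
        = T * T⁻¹ * (E * E) * (T⁻¹ * T) := by simp only [mul_assoc]
      _ = E * E := by
          rw [mul_nonsing_inv T hTdet, nonsing_inv_mul T hTdet, one_mul, mul_one]
  have hEE : (E * E).PosSemidef := by
    have := hE.pow 2
    rwa [pow_two] at this
  have h1 : fidelity S (iterMap U R S) = ((E.trace).re) ^ 2 := by
    unfold fidelity
    rw [← hTdef, hkey, msqrt_eq_of_sq hEE hE rfl]
  have h2 : E.trace = A.trace := trace_twirl U hU hG A
  have h3 : fidelity R S = ((A.trace).re) ^ 2 := by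
    unfold fidelity
    rw [trace_msqrt_symm hR hS, ← hTdef, ← hAdef]
  rw [h1, h2, h3]
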